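/- Let N be a finite set with n = |N| ≥ 1, let x : N → ℝ, and let m be an integer with 1 ≤ m ≤ n. Then the sum over all m-element subsets S of N of the maximum of x on S dominates the scaled total sum: n · Σ_{S ⊆ N, |S|=m} max_{t∈S} x(t) ≥ C(n,m) · Σ_{t∈N} x(t), where C(n,m) is the binomial coefficient. -/

import Mathlib

open Finset

/-- Maximum of a real-valued function over a finite set (0 on the empty set). -/
noncomputable def finsetMax {α : Type*} (x : α → ℝ) (S : Finset α) : ℝ :=
  if h : S.Nonempty then S.sup' h x else 0

/-- Counting lemma: for `t ∈ N`, the number of `m`-subsets of `N` containing `t`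
is `C(n-1, m-1)`. -/
lemma count_lemma {α : Type*} [DecidableEq α] (N : Finset α) (m : ℕ) (t : α)
    (ht : t ∈ N) (hm1 : 1 ≤ m) :
    ((N.powersetCard m).filter (fun S => t ∈ S)).card = (N.card - 1).choose (m - 1) := by
  rw [← card_erase_of_mem ht, ← card_powersetCard (m-1) (N.erase t)]
  refine Finset.card_bij' (fun S _ => S.erase t) (fun T _ => insert t T) ?_ ?_ ?_ ?_
  · intro S hS
    simp only [mem_filter, mem_powersetCard] at hS
    simp [mem_powersetCard, card_erase_of_mem hS.2,
      erase_subset_erase t hS.1.1, hS.1.2]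
  · intro T hT
    simp only [mem_powersetCard] at hT
    have htT : t ∉ T := fun h => (notMem_erase t N) (hT.1 h)
    simp only [mem_filter, mem_powersetCard]
    refine ⟨⟨?_, ?_⟩, mem_insert_self _ _⟩
    · exact insert_subset ht (hT.1.trans (erase_subset _ _))
    · rw [card_insert_of_notMem htT, hT.2]; omega
  · intro S hS
    simp only [mem_filter] at hS
    exact insert_erase hS.2
  · intro T hT
    simp only [mem_powersetCard] at hT
    exact erase_insert (fun h => (notMem_erase t N) (hT.1 h))

/-- The sum over all `m`-element subsets of the maximum of `x` dominates the
scaled total sum: `n * Σ_{|S|=m} max_{t∈S} x t ≥ C(n,m) * Σ_{t∈N} x t`. -/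
theorem card_mul_sum_subset_max_ge
    {α : Type*} [DecidableEq α] (N : Finset α) (x : α → ℝ) (m : ℕ)
    (hn : 1 ≤ N.card) (hm1 : 1 ≤ m) (hmn : m ≤ N.card) :
    (N.card : ℝ) * ∑ S ∈ N.powersetCard m, finsetMax x S ≥
      (N.card.choose m : ℝ) * ∑ t ∈ N, x t := by
  set P := N.powersetCard m with hP
  -- double counting
  have hdc : ∑ S ∈ P, ∑ t ∈ S, x t = ((N.card - 1).choose (m - 1) : ℝ) * ∑ t ∈ N, x t := by
    have h1 : ∀ S ∈ P, ∑ t ∈ S, x t = ∑ t ∈ N, if t ∈ S then x t else 0 := by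
      intro S hS
      rw [sum_ite_mem]
      congr 1
      exact (inter_eq_right.2 (mem_powersetCard.1 hS).1).symm
    rw [Finset.sum_congr rfl h1, Finset.sum_comm]
    rw [Finset.mul_sum]
    refine Finset.sum_congr rfl fun t ht => ?_
    rw [← Finset.sum_filter, Finset.sum_const, ← count_lemma N m t ht hm1]
    simp [mul_comm, hP]
  -- termwise bound: sum over S is at most m times the max over S
  have hterm : ∀ S ∈ P, ∑ t ∈ S, x t ≤ (m : ℝ) * finsetMax x S := by
    intro S hS
    obtain ⟨hsub, hcard⟩ := mem_powersetCard.1 hS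
    have hne : S.Nonempty := card_pos.1 (by omega)
    rw [finsetMax, dif_pos hne]
    calc ∑ t ∈ S, x t ≤ S.card • S.sup' hne x :=
          Finset.sum_le_card_nsmul S x _ (fun t ht => le_sup' x ht)
      _ = (m : ℝ) * S.sup' hne x := by rw [hcard, nsmul_eq_mul]
  have hsum : ∑ S ∈ P, ∑ t ∈ S, x t ≤ (m : ℝ) * ∑ S ∈ P, finsetMax x S := by
    rw [Finset.mul_sum]; exact Finset.sum_le_sum hterm
  have hchoose : (N.card : ℝ) * ((N.card - 1).choose (m - 1) : ℝ)
      = (m : ℝ) * (N.card.choose m : ℝ) := by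
    have := Nat.add_one_mul_choose_eq (N.card - 1) (m - 1)
    have e1 : N.card - 1 + 1 = N.card := by omega
    have e2 : m - 1 + 1 = m := by omega
    rw [e1, e2] at this
    exact_mod_cast this.trans (Nat.mul_comm _ _)
  have hm0 : (0 : ℝ) < m := by positivity
  rw [ge_iff_le, ← mul_le_mul_iff_right₀ hm0]
  calc (m:ℝ) * ((N.card.choose m : ℝ) * ∑ t ∈ N, x t)
      = (N.card : ℝ) * (((N.card - 1).choose (m - 1) : ℝ) * ∑ t ∈ N, x t) := by
        rw [← mul_assoc, ← hchoose]; ring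
    _ = (N.card : ℝ) * ∑ S ∈ P, ∑ t ∈ S, x t := by rw [hdc]
    _ ≤ (N.card : ℝ) * ((m : ℝ) * ∑ S ∈ P, finsetMax x S) := by
        apply mul_le_mul_of_nonneg_left hsum (by positivity)
    _ = (m:ℝ) * ((N.card : ℝ) * ∑ S ∈ P, finsetMax x S) := by ring
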